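/- Let θ be a unital action of an inverse monoid S on an algebra A and let N be the ideal of L(A,θ,S) = ⊕_{s∈S} 1_s A δ_s generated by the set X = {a δ_s − a δ_t : a ∈ 1_s A, s ≤ t}. Then X is invariant under left and right multiplication by elements of L(A,θ,S), and hence N equals the K-linear span of X. -/

import Mathlib

/-- An inverse monoid structure on a monoid `S`: every element `s` has a unique
generalized inverse `inv s`. -/
structure InverseMonoidStr (S : Type*) [Monoid S] where
  inv : S → S
  mul_inv_mul : ∀ s, s * inv s * s = s
  inv_mul_inv : ∀ s, inv s * s * inv s = inv s
  inv_unique : ∀ s t, s * t * s = s → t * s * t = t → t = inv s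

/-- The natural partial order of an inverse monoid: `s ≤ t` iff `s = f * t`
for some idempotent `f`. -/
def natLE {S : Type*} [Monoid S] (s t : S) : Prop := ∃ f : S, f * f = f ∧ s = f * t

/-- The minimum group congruence `σ` on an inverse monoid:
`(s, t) ∈ σ` iff there is `u` with `u ≤ s` and `u ≤ t`. -/
def sigmaRel {S : Type*} [Monoid S] (s t : S) : Prop := ∃ u : S, natLE u s ∧ natLE u t

/-- An inverse monoid is `E`-unitary if `e ≤ s` with `e` idempotent implies that
`s` is idempotent. -/
def EUnitary (S : Type*) [Monoid S] : Prop :=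
  ∀ u s : S, u * u = u → natLE u s → s * s = s

/-- A unital action `θ` of an inverse monoid `S` on a unital `K`-algebra `A`.
Each `θ s` is an algebra isomorphism from the unital ideal `1_{s⁻¹}A` onto the
unital ideal `1_s A`, where `1_s = e s` is a central idempotent of `A`; here the
partially defined map `θ_s` is encoded by the globally defined map
`a ↦ θ_s(1_{s⁻¹}·a)`, and `θ : S → I(A)` is a homomorphism of monoids with
`θ 1 = id`. -/
structure UnitalAction (K : Type*) [CommRing K] {S : Type*} [Monoid S]
    (I : InverseMonoidStr S) (A : Type*) [Ring A] [Algebra K A] where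
  θ : S → A → A
  e : S → A
  e_idem : ∀ s, e s * e s = e s
  e_central : ∀ s (a : A), e s * a = a * e s
  e_one : e 1 = 1
  theta_add : ∀ s (a b : A), θ s (a + b) = θ s a + θ s b
  theta_mul : ∀ s (a b : A), θ s (a * b) = θ s a * θ s b
  theta_smul : ∀ s (k : K) (a : A), θ s (k • a) = k • θ s a
  theta_dom : ∀ s (a : A), θ s (e (I.inv s) * a) = θ s a
  theta_ran : ∀ s (a : A), e s * θ s a = θ s a
  theta_comp : ∀ s t (a : A), θ (s * t) a = θ s (θ t a)
  theta_one : ∀ a : A, θ 1 a = a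
  theta_inv : ∀ s (a : A), θ (I.inv s) (θ s a) = e (I.inv s) * a
  theta_e : ∀ s, θ s 1 = e s

namespace UnitalAction

variable {K : Type*} [CommRing K] {S : Type*} [Monoid S] {I : InverseMonoidStr S}
  {A : Type*} [Ring A] [Algebra K A]

/-- An action `θ` of `S` on `A` is compatible if `θ_s` and `θ_t` agree on the
intersection `1_{s⁻¹}A ∩ 1_{t⁻¹}A` of their domains whenever `(s,t) ∈ σ`. -/
def Compatible (T : UnitalAction K I A) : Prop :=
  ∀ s t, sigmaRel s t → ∀ a : A, T.θ s (T.e (I.inv t) * a) = T.θ t (T.e (I.inv s) * a)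

/-- The `K`-submodule `D_g = Σ_{s ∈ g} 1_s A` of `A` attached to the σ-class of `t`. -/
def Dsub (T : UnitalAction K I A) (t : S) : Submodule K A :=
  Submodule.span K {x : A | ∃ s : S, ∃ a : A, sigmaRel s t ∧ x = T.e s * a}

/-- The `K`-module `L(A,θ,S) = ⊕_{s ∈ S} 1_s A δ_s` is carried by finitely supported
functions `S →₀ A`; its multiplication is `a δ_s · b δ_t = a θ_s(1_{s⁻¹} b) δ_{st}`. -/
noncomputable def lmul (T : UnitalAction K I A) (f g : S →₀ A) : S →₀ A :=
  f.sum fun s a => g.sum fun t b => Finsupp.single (s * t) (a * T.θ s b)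

/-- The carrier of `L(A,θ,S)` inside `S →₀ A`: functions whose value at `s`
lies in `1_s A`. -/
def LSet (T : UnitalAction K I A) : Set (S →₀ A) :=
  {f : S →₀ A | ∀ s, T.e s * f s = f s}

/-- The generating set `X = {a δ_s − a δ_t : a ∈ 1_s A, s ≤ t}` of the ideal `N`. -/
def XSet (T : UnitalAction K I A) : Set (S →₀ A) :=
  {x : S →₀ A | ∃ s t : S, ∃ a : A, natLE s t ∧ T.e s * a = a ∧
    x = Finsupp.single s a - Finsupp.single t a}

end UnitalAction


section InvAux
variable {S : Type*} [Monoid S]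

lemma inv_of_idem (I : InverseMonoidStr S) {f : S} (hf : f * f = f) : I.inv f = f := by
  have := I.inv_unique f f (by rw [hf, hf]) (by rw [hf, hf])
  exact this.symm

lemma idem_mul_idem (I : InverseMonoidStr S) {e f : S} (he : e * e = e) (hf : f * f = f) :
    (e * f) * (e * f) = e * f := by
  set x := I.inv (e * f) with hx
  have h1 : (e * f) * x * (e * f) = e * f := I.mul_inv_mul (e * f)
  have h2 : x * (e * f) * x = x := I.inv_mul_inv (e * f)
  have hy : f * x * e = x := by
    apply I.inv_unique
    · calc (e * f) * (f * x * e) * (e * f) = e * (f * f) * x * (e * e) * f := by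
            simp only [mul_assoc]
      _ = (e * f) * x * (e * f) := by rw [hf, he]; try simp only [mul_assoc]
      _ = e * f := h1
    · calc (f * x * e) * (e * f) * (f * x * e)
          = f * (x * ((e * e) * (f * f)) * x) * e := by simp only [mul_assoc]
      _ = f * (x * (e * f) * x) * e := by rw [he, hf]
      _ = f * x * e := by rw [h2]; try simp only [mul_assoc]
  have hxx : x * x = x := by
    conv_lhs => rw [← hy]
    calc (f * x * e) * (f * x * e) = f * (x * (e * f) * x) * e := by simp only [mul_assoc]
      _ = f * x * e := by rw [h2]; try simp only [mul_assoc]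
      _ = x := hy
  have : e * f = I.inv x := I.inv_unique x (e * f) h2 h1
  rw [this, inv_of_idem I hxx]
  exact hxx

lemma idem_comm (I : InverseMonoidStr S) {e f : S} (he : e * e = e) (hf : f * f = f) :
    e * f = f * e := by
  have hef := idem_mul_idem I he hf
  have hfe := idem_mul_idem I hf he
  have h1 : (e * f) * (f * e) * (e * f) = e * f := by
    calc (e * f) * (f * e) * (e * f) = e * (f * f) * (e * e) * f := by simp only [mul_assoc]
      _ = (e * f) * (e * f) := by rw [hf, he]; try simp only [mul_assoc]
      _ = e * f := hef
  have h2 : (f * e) * (e * f) * (f * e) = f * e := by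
    calc (f * e) * (e * f) * (f * e) = f * (e * e) * (f * f) * e := by simp only [mul_assoc]
      _ = (f * e) * (f * e) := by rw [he, hf]; try simp only [mul_assoc]
      _ = f * e := hfe
  have := I.inv_unique (e * f) (f * e) h1 h2
  rw [this, inv_of_idem I hef]

/-- right-handed form of the natural order -/
lemma natLE_iff_right (I : InverseMonoidStr S) {s t : S} : natLE s t ↔ ∃ f : S, f * f = f ∧ s = t * f := by
  have htt : (t * I.inv t) * (t * I.inv t) = t * I.inv t := by
    calc (t * I.inv t) * (t * I.inv t) = (t * I.inv t * t) * I.inv t := by simp only [mul_assoc]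
      _ = t * I.inv t := by rw [I.mul_inv_mul]
  have htt' : (I.inv t * t) * (I.inv t * t) = I.inv t * t := by
    calc (I.inv t * t) * (I.inv t * t) = (I.inv t * t * I.inv t) * t := by simp only [mul_assoc]
      _ = I.inv t * t := by rw [I.inv_mul_inv]
  constructor
  · rintro ⟨f, hf, rfl⟩
    refine ⟨I.inv t * (f * t), ?_, ?_⟩
    · calc (I.inv t * (f * t)) * (I.inv t * (f * t))
          = I.inv t * (f * (t * I.inv t) * (f * t)) := by simp only [mul_assoc]
      _ = I.inv t * ((t * I.inv t) * f * (f * t)) := by rw [idem_comm I hf htt]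
      _ = I.inv t * t * I.inv t * ((f * f) * t) := by simp only [mul_assoc]
      _ = I.inv t * (f * t) := by rw [hf, I.inv_mul_inv]; try simp only [mul_assoc]
    · calc f * t = f * (t * I.inv t * t) := by rw [I.mul_inv_mul]
      _ = f * (t * I.inv t) * t := by simp only [mul_assoc]
      _ = (t * I.inv t) * f * t := by rw [idem_comm I hf htt]
      _ = t * (I.inv t * (f * t)) := by simp only [mul_assoc]
  · rintro ⟨f, hf, rfl⟩
    refine ⟨t * f * I.inv t, ?_, ?_⟩
    · calc (t * f * I.inv t) * (t * f * I.inv t)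
          = t * (f * (I.inv t * t) * f) * I.inv t := by simp only [mul_assoc]
      _ = t * ((I.inv t * t) * f * f) * I.inv t := by rw [idem_comm I hf htt']
      _ = (t * I.inv t * t) * ((f * f) * I.inv t) := by simp only [mul_assoc]
      _ = t * f * I.inv t := by rw [hf, I.mul_inv_mul]; try simp only [mul_assoc]
    · calc t * f = (t * I.inv t * t) * f := by rw [I.mul_inv_mul]
      _ = t * ((I.inv t * t) * f) := by simp only [mul_assoc]
      _ = t * (f * (I.inv t * t)) := by rw [idem_comm I htt' hf]
      _ = (t * f * I.inv t) * t := by simp only [mul_assoc]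

lemma natLE_mul_right (I : InverseMonoidStr S) {s t : S} (h : natLE s t) (u : S) : natLE (s * u) (t * u) := by
  obtain ⟨f, hf, rfl⟩ := h
  exact ⟨f, hf, by simp only [mul_assoc]⟩

lemma natLE_mul_left (I : InverseMonoidStr S) {s t : S} (h : natLE s t) (u : S) : natLE (u * s) (u * t) := by
  rw [natLE_iff_right I] at h ⊢
  obtain ⟨f, hf, rfl⟩ := h
  exact ⟨f, hf, by simp only [mul_assoc]⟩

end InvAux
namespace UnitalAction
variable {K : Type*} [CommRing K] {S : Type*} [Monoid S] {I : InverseMonoidStr S}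
  {A : Type*} [Ring A] [Algebra K A] (T : UnitalAction K I A)

lemma theta_zero (s : S) : T.θ s 0 = 0 := by
  have h := T.theta_add s 0 0
  rw [add_zero] at h
  exact left_eq_add.mp h

lemma theta_sub (s : S) (a b : A) : T.θ s (a - b) = T.θ s a - T.θ s b := by
  have := T.theta_add s (a - b) b
  rw [sub_add_cancel] at this
  rw [this, add_sub_cancel_right]

lemma e_mul (s t : S) : T.e (s * t) = T.θ s (T.e t) := by
  rw [← T.theta_e, T.theta_comp, T.theta_e]

lemma theta_idem {f : S} (hf : f * f = f) (a : A) : T.θ f a = T.e f * a := by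
  have h1 : T.θ f (T.θ f a) = T.e f * a := by
    have := T.theta_inv f a
    rwa [inv_of_idem I hf] at this
  calc T.θ f a = T.θ (f * f) a := by rw [hf]
    _ = T.θ f (T.θ f a) := T.theta_comp f f a
    _ = T.e f * a := h1

/-- key coefficient identity for right multiplication -/
lemma coeff_eq {s t : S} (h : natLE s t) {a : A} (ha : T.e s * a = a) (b : A) :
    a * T.θ s b = a * T.θ t b := by
  obtain ⟨f, hf, rfl⟩ := h
  have hθ : T.θ (f * t) b = T.e f * T.θ t b := by
    rw [T.theta_comp, theta_idem T hf]
  have hes : T.e (f * t) = T.e f * T.e t := by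
    rw [e_mul, theta_idem T hf]
  have haf : a * T.e f = a := by
    rw [← T.e_central]
    conv_lhs => rw [← ha, hes]
    calc T.e f * (T.e f * T.e t * a) = (T.e f * T.e f) * (T.e t * a) := by
          simp only [mul_assoc]
      _ = T.e f * T.e t * a := by rw [T.e_idem]; try simp only [mul_assoc]
      _ = T.e (f * t) * a := by rw [hes]
      _ = a := ha
  rw [hθ, ← mul_assoc, haf]

lemma lmul_single_single (u s : S) (b a : A) :
    T.lmul (Finsupp.single u b) (Finsupp.single s a)
      = Finsupp.single (u * s) (b * T.θ u a) := by
  unfold lmul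
  rw [Finsupp.sum_single_index (by simp [theta_zero]),
    Finsupp.sum_single_index (by simp [theta_zero])]

lemma lmul_sub_left (f g h : S →₀ A) :
    T.lmul (f - g) h = T.lmul f h - T.lmul g h := by
  unfold lmul
  exact Finsupp.sum_sub_index fun r c₁ c₂ => by
    simp only [sub_mul, Finsupp.single_sub, Finsupp.sum_sub]

lemma lmul_add_left (f g h : S →₀ A) :
    T.lmul (f + g) h = T.lmul f h + T.lmul g h := by
  unfold lmul
  exact Finsupp.sum_add_index' (fun r => by simp)
    (fun r c₁ c₂ => by simp only [add_mul, Finsupp.single_add, Finsupp.sum_add])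

lemma lmul_smul_left (k : K) (f g : S →₀ A) :
    T.lmul (k • f) g = k • T.lmul f g := by
  unfold lmul
  rw [Finsupp.sum_smul_index' (fun i => by simp), Finsupp.smul_sum]
  refine Finsupp.sum_congr fun i _ => ?_
  rw [Finsupp.smul_sum]
  exact Finsupp.sum_congr fun j _ => by rw [smul_mul_assoc, Finsupp.smul_single]

lemma lmul_zero_left (g : S →₀ A) : T.lmul 0 g = 0 := by
  unfold lmul
  exact Finsupp.sum_zero_index

lemma lmul_sub_right (f g h : S →₀ A) :
    T.lmul f (g - h) = T.lmul f g - T.lmul f h := by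
  unfold lmul
  rw [← Finsupp.sum_sub]
  exact Finsupp.sum_congr fun s _ =>
    Finsupp.sum_sub_index fun r c₁ c₂ => by
      rw [theta_sub, mul_sub, Finsupp.single_sub]

lemma lmul_add_right (f g h : S →₀ A) :
    T.lmul f (g + h) = T.lmul f g + T.lmul f h := by
  unfold lmul
  rw [← Finsupp.sum_add]
  exact Finsupp.sum_congr fun s _ =>
    Finsupp.sum_add_index' (fun r => by simp [theta_zero])
      (fun r c₁ c₂ => by rw [T.theta_add, mul_add, Finsupp.single_add])

lemma lmul_smul_right (k : K) (f g : S →₀ A) :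
    T.lmul f (k • g) = k • T.lmul f g := by
  unfold lmul
  rw [Finsupp.smul_sum]
  refine Finsupp.sum_congr fun s _ => ?_
  rw [Finsupp.sum_smul_index' (fun i => by simp [theta_zero]), Finsupp.smul_sum]
  exact Finsupp.sum_congr fun j _ => by
    rw [T.theta_smul, mul_smul_comm, Finsupp.smul_single]

lemma lmul_zero_right (f : S →₀ A) : T.lmul f 0 = 0 := by
  unfold lmul
  have h : (f.sum fun s a => (0 : S →₀ A).sum fun t b => Finsupp.single (s * t) (a * T.θ s b))
      = f.sum fun _ _ => (0 : S →₀ A) :=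
    Finsupp.sum_congr fun s _ => Finsupp.sum_zero_index
  rw [h]; exact Finset.sum_const_zero

lemma lmul_eq_sum_left (f g : S →₀ A) :
    T.lmul f g = f.sum fun u b => T.lmul (Finsupp.single u b) g := by
  unfold lmul
  exact Finsupp.sum_congr fun u _ =>
    (Finsupp.sum_single_index
      (h := fun s a => g.sum fun t b => Finsupp.single (s * t) (a * T.θ s b))
      (by simp)).symm

lemma lmul_eq_sum_right (f g : S →₀ A) :
    T.lmul f g = g.sum fun u b => T.lmul f (Finsupp.single u b) := by
  unfold lmul
  rw [Finsupp.sum_comm]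
  exact Finsupp.sum_congr fun u _ => Finsupp.sum_congr fun s _ =>
    (Finsupp.sum_single_index
      (h := fun t c => Finsupp.single (s * t) (f s * T.θ s c))
      (by simp [theta_zero])).symm

lemma lmul_single_sub (u s t : S) (b a : A) :
    T.lmul (Finsupp.single u b) (Finsupp.single s a - Finsupp.single t a)
      = Finsupp.single (u * s) (b * T.θ u a) - Finsupp.single (u * t) (b * T.θ u a) := by
  rw [lmul_sub_right, lmul_single_single, lmul_single_single]

lemma lmul_sub_single (u s t : S) (b a : A) :
    T.lmul (Finsupp.single s a - Finsupp.single t a) (Finsupp.single u b)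
      = Finsupp.single (s * u) (a * T.θ s b) - Finsupp.single (t * u) (a * T.θ t b) := by
  rw [lmul_sub_left, lmul_single_single, lmul_single_single]

end UnitalAction
open UnitalAction in
/-- Let `θ` be a unital action of an inverse monoid `S` on an algebra
`A` and let `N` be the ideal of `L(A,θ,S) = ⊕_{s∈S} 1_s A δ_s` generated by the set
`X = {a δ_s − a δ_t : a ∈ 1_s A, s ≤ t}`.  Then `X` is invariant under left and right
multiplication by elements of `L(A,θ,S)`, and hence `N` equals the `K`-linear span
of `X`. -/
theorem XSet_invariant_span {K : Type*} [CommRing K] {S : Type*} [Monoid S]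
    (I : InverseMonoidStr S) {A : Type*} [Ring A] [Algebra K A]
    (T : UnitalAction K I A) :
    -- invariance of `X` under multiplication by elements `b δ_u` of `L(A,θ,S)`
    (∀ x ∈ T.XSet, ∀ (u : S) (b : A), T.e u * b = b →
      T.lmul (Finsupp.single u b) x ∈ T.XSet ∧ T.lmul x (Finsupp.single u b) ∈ T.XSet) ∧
    -- hence the `K`-span of `X` absorbs multiplication by `L(A,θ,S)`, i.e. it is
    -- the ideal `N` generated by `X`
    (∀ y ∈ T.LSet, ∀ z ∈ Submodule.span K T.XSet,
      T.lmul y z ∈ Submodule.span K T.XSet ∧ T.lmul z y ∈ Submodule.span K T.XSet) := by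
  have part1 : ∀ x ∈ T.XSet, ∀ (u : S) (b : A), T.e u * b = b →
      T.lmul (Finsupp.single u b) x ∈ T.XSet ∧ T.lmul x (Finsupp.single u b) ∈ T.XSet := by
    rintro x ⟨s, t, a, hst, ha, rfl⟩ u b hb
    constructor
    · rw [T.lmul_single_sub]
      refine ⟨u * s, u * t, b * T.θ u a, natLE_mul_left I hst u, ?_, rfl⟩
      have h1 : T.e (u * s) = T.θ u (T.e s) := T.e_mul u s
      have h2 : T.θ u a = T.e (u * s) * T.θ u a := by
        conv_lhs => rw [← ha]
        rw [T.theta_mul, ← h1]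
      calc T.e (u * s) * (b * T.θ u a) = b * (T.e (u * s) * T.θ u a) := by
            rw [← mul_assoc, T.e_central, mul_assoc]
        _ = b * T.θ u a := by rw [← h2]
    · rw [T.lmul_sub_single, ← T.coeff_eq hst ha b]
      refine ⟨s * u, t * u, a * T.θ s b, natLE_mul_right I hst u, ?_, rfl⟩
      have h1 : T.e (s * u) = T.θ s (T.e u) := T.e_mul s u
      have h2 : T.θ s b = T.e (s * u) * T.θ s b := by
        conv_lhs => rw [← hb]
        rw [T.theta_mul, ← h1]
      calc T.e (s * u) * (a * T.θ s b) = a * (T.e (s * u) * T.θ s b) := by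
            rw [← mul_assoc, T.e_central, mul_assoc]
        _ = a * T.θ s b := by rw [← h2]
  refine ⟨part1, fun y hy z hz => ⟨?_, ?_⟩⟩
  · induction hz using Submodule.span_induction with
    | mem x hx =>
        rw [T.lmul_eq_sum_left]
        exact Submodule.finsuppSum_mem K _ y _ fun u _ =>
          Submodule.subset_span ((part1 x hx u (y u) (hy u)).1)
    | zero =>
        rw [T.lmul_zero_right]; exact Submodule.zero_mem _
    | add a b _ _ ha hb =>
        rw [T.lmul_add_right]; exact Submodule.add_mem _ ha hb
    | smul k a _ ha =>
        rw [T.lmul_smul_right]; exact Submodule.smul_mem _ _ ha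
  · induction hz using Submodule.span_induction with
    | mem x hx =>
        rw [T.lmul_eq_sum_right]
        exact Submodule.finsuppSum_mem K _ y _ fun u _ =>
          Submodule.subset_span ((part1 x hx u (y u) (hy u)).2)
    | zero =>
        rw [T.lmul_zero_left]; exact Submodule.zero_mem _
    | add a b _ _ ha hb =>
        rw [T.lmul_add_left]; exact Submodule.add_mem _ ha hb
    | smul k a _ ha =>
        rw [T.lmul_smul_left]; exact Submodule.smul_mem _ _ ha
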